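/- Let α > 1 and let φ : [0,∞) → [0,∞) be a comparison function for which there exist a > 0 and ε > 0 with φ(x) ≤ x − a·x^α for all x ∈ [0, ε]. Then for every r ≥ 0, limsup_{n→∞} φ^[n](r) · n^{1/(α−1)} is finite. -/

import Mathlib

theorem limsup_finite_of_comparison_Gamma_alpha
    (α : ℝ) (hα : 1 < α)
    (φ : ℝ → ℝ)
    (hφ_nonneg : ∀ r, 0 ≤ r → 0 ≤ φ r)
    (hφ_mono : ∀ x y, 0 ≤ x → x ≤ y → φ x ≤ φ y)
    (hφ_iter : ∀ r, 0 ≤ r → Filter.Tendsto (fun n => φ^[n] r) Filter.atTop (nhds 0))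
    (a ε : ℝ) (ha : 0 < a) (hε : 0 < ε)
    (hφ_le : ∀ x ∈ Set.Icc (0 : ℝ) ε, φ x ≤ x - a * x ^ α) :
    ∀ r : ℝ, 0 ≤ r →
      Filter.IsBoundedUnder (· ≤ ·) Filter.atTop
        (fun n : ℕ => φ^[n] r * (n : ℝ) ^ (1 / (α - 1))) := by
  have hα1 : (0:ℝ) < α - 1 := by linarith
  set β : ℝ := 1 / (α - 1) with hβdef
  have hβ : 0 < β := by positivity
  have hβα1 : β * (α - 1) = 1 := by rw [hβdef, one_div, inv_mul_cancel₀ hα1.ne']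
  set C : ℝ := (β / a) ^ β with hCdef
  have hC : 0 < C := Real.rpow_pos_of_pos (by positivity) _
  have hβα1' : β * α = β + 1 := by ring_nf; ring_nf at hβα1; linarith
  have hCa : a * C ^ (α - 1) = β := by
    rw [hCdef, ← Real.rpow_mul (by positivity : (0:ℝ) ≤ β / a), hβα1, Real.rpow_one]
    field_simp
  -- key inequality
  have hkey : ∀ t : ℝ, 1 ≤ t →
      C * t ^ (-β) - a * (C * t ^ (-β)) ^ α ≤ C * (t + 1) ^ (-β) := by
    intro t ht
    have ht0 : (0:ℝ) < t := lt_of_lt_of_le one_pos ht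
    have hti : (0:ℝ) < t⁻¹ := by positivity
    have hEq : a * (C * t ^ (-β)) ^ α = β * (C * t ^ (-β)) * t⁻¹ := by
      have hc1 : C ^ α = C ^ (α - 1) * C := by
        rw [show α = (α - 1) + 1 by ring, Real.rpow_add hC, Real.rpow_one]
        ring_nf
      have ht1 : t ^ (-β * α) = t ^ (-β) * t⁻¹ := by
        rw [show -β * α = -β + -1 by linear_combination -hβα1', Real.rpow_add ht0, Real.rpow_neg_one]
      rw [Real.mul_rpow hC.le (Real.rpow_nonneg ht0.le _), ← Real.rpow_mul ht0.le,
        ht1, hc1, ← hCa]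
      ring
    rw [hEq]
    have hmain : 1 - β * t⁻¹ ≤ (1 + t⁻¹) ^ (-β) := by
      rcases le_or_gt β 1 with hβ1 | hβ1
      · have hb : (1 + t⁻¹) ^ β ≤ 1 + β * t⁻¹ :=
          rpow_one_add_le_one_add_mul_self (by linarith) hβ.le hβ1
        have hp1 : (0:ℝ) < 1 + β * t⁻¹ := by positivity
        have hp2 : (0:ℝ) < (1 + t⁻¹) ^ β := Real.rpow_pos_of_pos (by positivity) _
        have h1 : 1 - β * t⁻¹ ≤ 1 / (1 + β * t⁻¹) := by
          rw [le_div_iff₀ hp1]; nlinarith [sq_nonneg (β * t⁻¹)]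
        have h2 : 1 / (1 + β * t⁻¹) ≤ 1 / ((1 + t⁻¹) ^ β) :=
          one_div_le_one_div_of_le hp2 hb
        calc 1 - β * t⁻¹ ≤ 1 / ((1 + t⁻¹) ^ β) := h1.trans h2
          _ = (1 + t⁻¹) ^ (-β) := by
              rw [Real.rpow_neg (by positivity), one_div]
      · have hs : (-1:ℝ) ≤ -(t+1)⁻¹ := by
          rw [neg_le_neg_iff]
          exact inv_le_one_of_one_le₀ (by linarith)
        have hb := one_add_mul_self_le_rpow_one_add hs hβ1.le
        have heq : (1:ℝ) + -(t+1)⁻¹ = t / (t+1) := by field_simp; ring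
        rw [heq] at hb
        have heq2 : (1 + t⁻¹) ^ (-β) = (t / (t+1)) ^ β := by
          have h3 : (1:ℝ) + t⁻¹ = (t / (t+1))⁻¹ := by field_simp
          have hx : (0:ℝ) < t / (t + 1) := by positivity
          rw [h3, Real.inv_rpow hx.le, Real.rpow_neg hx.le, inv_inv]
        rw [heq2]
        have h4 : β * (t+1)⁻¹ ≤ β * t⁻¹ := by
          apply mul_le_mul_of_nonneg_left _ hβ.le
          exact inv_anti₀ ht0 (by linarith)
        nlinarith
    have hsplit : C * (t + 1) ^ (-β) = (C * t ^ (-β)) * (1 + t⁻¹) ^ (-β) := by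
      rw [show t + 1 = t * (1 + t⁻¹) by field_simp,
        Real.mul_rpow ht0.le (by positivity)]
      ring
    rw [hsplit]
    calc C * t ^ (-β) - β * (C * t ^ (-β)) * t⁻¹
        = (C * t ^ (-β)) * (1 - β * t⁻¹) := by ring
      _ ≤ (C * t ^ (-β)) * ((1 + t⁻¹) ^ (-β)) :=
          mul_le_mul_of_nonneg_left hmain (by positivity)
  intro r hr
  -- choose m
  obtain ⟨M, hM⟩ := exists_nat_gt ((C / ε) ^ (α - 1))
  set m : ℕ := M + 1 with hmdef
  have hm1 : (1:ℝ) ≤ (m:ℝ) := by exact_mod_cast Nat.one_le_iff_ne_zero.mpr (by omega)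
  have hmge : (C / ε) ^ (α - 1) ≤ (m:ℝ) := by
    rw [hmdef]; push_cast; linarith
  have hmε : C * (m:ℝ) ^ (-β) ≤ ε := by
    have h1 : C / ε ≤ (m:ℝ) ^ β := by
      calc C / ε = ((C / ε) ^ (α - 1)) ^ β := by
            rw [← Real.rpow_mul (by positivity : (0:ℝ) ≤ C / ε),
              show (α - 1) * β = 1 by rw [mul_comm]; exact hβα1, Real.rpow_one]
        _ ≤ (m:ℝ) ^ β := Real.rpow_le_rpow (Real.rpow_nonneg (by positivity) _) hmge hβ.le
    have hmβ : (0:ℝ) < (m:ℝ) ^ β := Real.rpow_pos_of_pos (by linarith) _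
    rw [Real.rpow_neg (by linarith), ← div_eq_mul_inv, div_le_iff₀ hmβ]
    rw [div_le_iff₀ hε] at h1
    linarith
  -- nonnegativity of iterates
  have hiter_nonneg : ∀ k, 0 ≤ φ^[k] r := by
    intro k
    induction k with
    | zero => exact hr
    | succ k ih => rw [Function.iterate_succ_apply']; exact hφ_nonneg _ ih
  -- choose N
  have hpos : 0 < C * (m:ℝ) ^ (-β) := by positivity
  obtain ⟨N, hN⟩ : ∃ N, φ^[N] r ≤ C * (m:ℝ) ^ (-β) :=
    ((hφ_iter r hr).eventually (eventually_le_nhds hpos)).exists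
  -- main induction
  have hbound : ∀ n : ℕ, φ^[N + n] r ≤ C * ((n + m : ℕ):ℝ) ^ (-β) := by
    intro n
    induction n with
    | zero => simpa using hN
    | succ n ih =>
      have htm : (1:ℝ) ≤ ((n + m : ℕ):ℝ) := by
        push_cast; linarith [Nat.cast_nonneg (α := ℝ) n]
      have htm0 : (0:ℝ) < ((n + m : ℕ):ℝ) := by linarith
      have hle : C * ((n + m : ℕ):ℝ) ^ (-β) ≤ ε := by
        refine le_trans ?_ hmε
        apply mul_le_mul_of_nonneg_left _ hC.le
        apply Real.rpow_le_rpow_of_nonpos (by linarith) _ (by linarith)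
        push_cast; linarith [Nat.cast_nonneg (α := ℝ) n]
      have hstep : φ^[N + (n+1)] r = φ (φ^[N + n] r) := by
        rw [← Nat.add_assoc, Function.iterate_succ_apply']
      rw [hstep]
      calc φ (φ^[N + n] r)
          ≤ φ (C * ((n + m : ℕ):ℝ) ^ (-β)) := hφ_mono _ _ (hiter_nonneg _) ih
        _ ≤ C * ((n + m : ℕ):ℝ) ^ (-β) - a * (C * ((n + m : ℕ):ℝ) ^ (-β)) ^ α :=
            hφ_le _ ⟨by positivity, hle⟩
        _ ≤ C * (((n + m : ℕ):ℝ) + 1) ^ (-β) := hkey _ htm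
        _ = C * ((n + 1 + m : ℕ):ℝ) ^ (-β) := by push_cast; ring_nf
  -- conclude boundedness
  refine ⟨C * ((N:ℝ) + m) ^ β, ?_⟩
  rw [Filter.eventually_map]
  filter_upwards [Filter.eventually_ge_atTop N] with n hn
  set k : ℕ := n - N with hkdef
  have hnk : n = N + k := by omega
  have hb := hbound k
  rw [← hnk] at hb
  have hkm0 : (0:ℝ) < ((k + m : ℕ):ℝ) := by
    push_cast; linarith [Nat.cast_nonneg (α := ℝ) k]
  have h1 : (n:ℝ) ≤ ((N:ℝ) + m) * ((k + m : ℕ):ℝ) := by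
    have hN0 : (0:ℝ) ≤ (N:ℝ) := Nat.cast_nonneg _
    have hk0 : (0:ℝ) ≤ (k:ℝ) := Nat.cast_nonneg _
    rw [hnk]; push_cast; nlinarith
  have h2 : (n:ℝ) ^ β ≤ ((N:ℝ) + m) ^ β * ((k + m : ℕ):ℝ) ^ β := by
    rw [← Real.mul_rpow (by positivity) hkm0.le]
    exact Real.rpow_le_rpow (Nat.cast_nonneg _) h1 hβ.le
  have h3 : φ^[n] r * (n:ℝ) ^ β ≤ (C * ((k + m : ℕ):ℝ) ^ (-β)) * (n:ℝ) ^ β :=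
    mul_le_mul_of_nonneg_right hb (Real.rpow_nonneg (Nat.cast_nonneg _) _)
  have h4 : (C * ((k + m : ℕ):ℝ) ^ (-β)) * (n:ℝ) ^ β
      ≤ (C * ((k + m : ℕ):ℝ) ^ (-β)) * (((N:ℝ) + m) ^ β * ((k + m : ℕ):ℝ) ^ β) :=
    mul_le_mul_of_nonneg_left h2 (by positivity)
  have h5 : (C * ((k + m : ℕ):ℝ) ^ (-β)) * (((N:ℝ) + m) ^ β * ((k + m : ℕ):ℝ) ^ β)
      = C * ((N:ℝ) + m) ^ β := by
    rw [Real.rpow_neg hkm0.le]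
    field_simp
  calc φ^[n] r * (n:ℝ) ^ β ≤ _ := h3
    _ ≤ _ := h4
    _ = C * ((N:ℝ) + m) ^ β := h5
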